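/- arXiv:1907.07841 — 7 statements merged into one kernel-verified Lean document; each statement's English description precedes it below -/
import Mathlib

section
/- Let n be a nonempty finite index type, let A : Matrix n n ℝ, and let Q and R be symmetric positive definite real n×n matrices. Suppose A has a complex eigenvalue of modulus strictly greater than 1 (i.e., the spectral radius ρ(A) > 1). Then the one-stage cost function c(φ) := Tr(Q · F(φ)) is strictly monotonically increasing in φ: for all positive integers φ and z, c(φ) < c(φ + z). -/
open Matrix

private lemma pow_ne_zero_of_eig {n : Type*} [Fintype n] [DecidableEq n]
    (A : Matrix n n ℝ)
    (hA : ∃ μ : ℂ, 1 < ‖μ‖ ∧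
      ∃ v : n → ℂ, v ≠ 0 ∧ (A.map Complex.ofReal).mulVec v = μ • v)
    (k : ℕ) : A ^ k ≠ 0 := by
  obtain ⟨μ, hμ, v, hv, hAv⟩ := hA
  have hμ0 : μ ≠ 0 := by
    intro h; rw [h] at hμ; simp at hμ; linarith
  have hpow : ((A.map Complex.ofReal) ^ k).mulVec v = μ ^ k • v := by
    induction k with
    | zero => simp [Matrix.one_mulVec]
    | succ m ih =>
      rw [pow_succ, ← Matrix.mulVec_mulVec, hAv, Matrix.mulVec_smul, ih,
        smul_smul, pow_succ, mul_comm]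
  have hmap : (A ^ k).map Complex.ofReal = (A.map Complex.ofReal) ^ k := by
    exact
      map_pow (Complex.ofRealHom.mapMatrix (m := n)) A k
  intro h
  have : ((A.map Complex.ofReal) ^ k).mulVec v = 0 := by
    rw [← hmap, h]; simp
  rw [hpow] at this
  exact hv (by simpa [smul_eq_zero, pow_eq_zero_iff, hμ0] using this)

private lemma trace_term_pos {n : Type*} [Fintype n] [Nonempty n] [DecidableEq n]
    (Q R : Matrix n n ℝ) (hQ : Q.PosDef) (hR : R.PosDef)
    (B : Matrix n n ℝ) (hB : B ≠ 0) :
    0 < (Q * (B * R * Bᵀ)).trace := by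
  obtain ⟨C, hC⟩ : ∃ C : Matrix n n ℝ, R = Cᴴ * C := by
    open scoped MatrixOrder Matrix.Norms.L2Operator in
    exact CStarAlgebra.nonneg_iff_eq_star_mul_self.mp hR.posSemidef.nonneg
  have hCunit : IsUnit C := by
    have hdet : (0:ℝ) < R.det := hR.det_pos
    rw [hC, Matrix.det_mul] at hdet
    exact (Matrix.isUnit_iff_isUnit_det C).mpr (by
      exact isUnit_iff_ne_zero.mpr (by intro h; rw [h] at hdet; simp at hdet))
  set D : Matrix n n ℝ := C * Bᵀ with hD
  have hDn : D ≠ 0 := by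
    intro h
    apply hB
    have : Bᵀ = 0 := hCunit.mul_left_cancel (by simpa using h)
    simpa using congrArg Matrix.transpose this
  have hCconj : Cᴴ = Cᵀ := by
    ext i j; simp [Matrix.conjTranspose_apply, Matrix.transpose_apply]
  have hBRB : B * R * Bᵀ = Dᵀ * D := by
    rw [hC, hCconj, hD]
    simp [Matrix.transpose_mul, Matrix.mul_assoc]
  rw [hBRB, ← Matrix.mul_assoc, Matrix.trace_mul_cycle]
  have hdiag : ∀ i, (D * Q * Dᵀ) i i = (D i) ⬝ᵥ Q.mulVec (D i) := by
    intro i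
    simp [Matrix.mul_assoc, Matrix.mul_apply, Matrix.mulVec, dotProduct,
      Matrix.transpose_apply, Finset.mul_sum, Finset.sum_mul]
    rw [Finset.sum_comm]
    exact Finset.sum_congr rfl fun x _ => Finset.sum_congr rfl fun j _ => by ring
  rw [Matrix.trace]
  obtain ⟨i0, hi0⟩ : ∃ i, D i ≠ 0 := by
    by_contra h
    push_neg at h
    exact hDn (by ext i j; simpa using congrFun (h i) j)
  apply Finset.sum_pos'
  · intro i _
    have := hQ.posSemidef.dotProduct_mulVec_nonneg (D i)
    simpa [Matrix.diag, hdiag i] using this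
  · refine ⟨i0, Finset.mem_univ _, ?_⟩
    have := hQ.dotProduct_mulVec_pos hi0
    simpa [Matrix.diag, hdiag i0] using this

/-- If `A` has a complex eigenvalue of modulus greater than one, then the
one-stage cost `c(φ) = Tr(Q · F(φ))`, with `F(φ) = ∑_{i=1}^{φ} A^{i-1} R (Aᵀ)^{i-1}`,
is strictly increasing in `φ`. -/
theorem one_stage_cost_strict_mono
    {n : Type*} [Fintype n] [Nonempty n] [DecidableEq n]
    (A Q R : Matrix n n ℝ) (hQ : Q.PosDef) (hR : R.PosDef)
    (hA : ∃ μ : ℂ, 1 < ‖μ‖ ∧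
      ∃ v : n → ℂ, v ≠ 0 ∧ (A.map Complex.ofReal).mulVec v = μ • v)
    (φ z : ℕ) (hφ : 1 ≤ φ) (hz : 1 ≤ z) :
    (Q * ∑ i ∈ Finset.range φ, A ^ i * R * (Aᵀ) ^ i).trace <
      (Q * ∑ i ∈ Finset.range (φ + z), A ^ i * R * (Aᵀ) ^ i).trace := by
  have hsplit := Finset.sum_range_add_sum_Ico
    (fun i => A ^ i * R * (Aᵀ) ^ i) (Nat.le_add_right φ z)
  rw [← hsplit, Matrix.mul_add, Matrix.trace_add]
  apply lt_add_of_pos_right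
  rw [Finset.mul_sum, Matrix.trace_sum]
  apply Finset.sum_pos
  · intro i _
    have h1 : (Aᵀ) ^ i = (A ^ i)ᵀ := (Matrix.transpose_pow A i).symm
    rw [h1]
    exact trace_term_pos Q R hQ hR (A ^ i) (pow_ne_zero_of_eig A hA i)
  · exact Finset.nonempty_Ico.mpr (by omega)
end

section
/- Let n, m be finite index types, A : Matrix n n ℝ, B : Matrix n m ℝ, K : Matrix m n ℝ, and let x, e, w : ℕ → (n → ℝ) be sequences of vectors. Let η and k be natural numbers with 1 ≤ η ≤ k, and suppose that for every j with k − η ≤ j ≤ k − 1 the recursion x_{j+1} = A x_j + B K (A + B K)^{j−(k−η)} (x_{k−η} − e_{k−η}) + w_j holds (matrix–vector multiplication). Then x_k = (A + B K)^η x_{k−η} + (A^η − (A + B K)^η) e_{k−η} + ∑_{i=1}^{η} A^{i−1} w_{k−i}. -/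
open Matrix

/-- Unrolling the plant recursion over one control cycle: if for all
`k - η ≤ j ≤ k - 1` we have
`x_{j+1} = A x_j + B K (A+BK)^{j-(k-η)} (x_{k-η} - e_{k-η}) + w_j`, then
`x_k = (A+BK)^η x_{k-η} + (A^η - (A+BK)^η) e_{k-η} + ∑_{i=1}^{η} A^{i-1} w_{k-i}`. -/
theorem control_cycle_state_representation
    {n m : Type*} [Fintype n] [Fintype m] [DecidableEq n]
    (A : Matrix n n ℝ) (B : Matrix n m ℝ) (K : Matrix m n ℝ)
    (x e w : ℕ → n → ℝ) (η k : ℕ) (hη : 1 ≤ η) (hηk : η ≤ k)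
    (hrec : ∀ j, k - η ≤ j → j ≤ k - 1 →
      x (j + 1) = A.mulVec (x j)
        + (B * K * (A + B * K) ^ (j - (k - η))).mulVec (x (k - η) - e (k - η))
        + w j) :
    x k = ((A + B * K) ^ η).mulVec (x (k - η))
        + (A ^ η - (A + B * K) ^ η).mulVec (e (k - η))
        + ∑ i ∈ Finset.range η, (A ^ i).mulVec (w (k - 1 - i)) := by
  set P := A + B * K with hP
  set t := k - η with ht
  have htk : t + η = k := Nat.sub_add_cancel hηk
  have key : ∀ d, d ≤ η → x (t + d) = (P ^ d).mulVec (x t)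
      + (A ^ d - P ^ d).mulVec (e t)
      + ∑ i ∈ Finset.range d, (A ^ i).mulVec (w (t + d - 1 - i)) := by
    intro d hd
    induction d with
    | zero => simp
    | succ d ih =>
      have hd' : d ≤ η := Nat.le_of_succ_le hd
      have hrecd := hrec (t + d) (by omega) (by omega)
      have h1 : t + d - t = d := by omega
      rw [h1, ih hd'] at hrecd
      have h2 : t + (d + 1) = (t + d) + 1 := by omega
      rw [h2, hrecd]
      rw [Finset.sum_range_succ']
      have h3 : ∀ i, t + d + 1 - 1 - (i + 1) = t + d - 1 - i := by intro i; omega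
      have h4 : t + d + 1 - 1 - 0 = t + d := by omega
      have hsum := map_sum (Matrix.mulVecLin A)
        (fun i => (A ^ i) *ᵥ w (t + d - 1 - i)) (Finset.range d)
      simp only [Matrix.mulVecLin_apply] at hsum
      simp only [h3, h4, pow_zero, Matrix.one_mulVec, hP,
        Matrix.mulVec_add, Matrix.sub_mulVec, Matrix.add_mulVec,
        Matrix.mulVec_sub, ← Matrix.mulVec_mulVec, pow_succ', hsum]
      abel
  have := key η le_rfl
  rw [htk] at this
  exact this
end

section
/- Let n, m be finite index types, A : Matrix n n ℝ, B : Matrix n m ℝ, K : Matrix m n ℝ with (A + B K)^v = 0 for some positive integer v. Let x, e, w : ℤ → (n → ℝ), let η : ℕ → ℕ satisfy η(l) ≥ 1 for all l, let k : ℤ, and define t(l) := k − ∑_{j<l} η(j) (so t(0) = k). Suppose that for every l with 0 ≤ l ≤ v − 1 the one-cycle representation x_{t(l)} = (A + B K)^{η(l)} x_{t(l+1)} + (A^{η(l)} − (A + B K)^{η(l)}) e_{t(l+1)} + ∑_{i=1}^{η(l)} A^{i−1} w_{t(l)−i} holds. Then x_k = ∑_{l=0}^{v−1} (A + B K)^{∑_{j<l}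 η(j)} ( ∑_{i=1}^{η(l)} A^{i−1} w_{t(l)−i} + (A^{η(l)} − (A + B K)^{η(l)}) e_{t(l+1)} ), i.e., the current plant state depends only on the disturbance terms and the estimation errors at the last v successful controller transmissions, and not on any earlier plant state. -/
open Matrix

/-- For a `v`-step controllable plant (`(A+BK)^v = 0`), unrolling the
one-cycle state representation over the last `v` successful controller transmissions
shows that the current state depends only on the disturbances and the estimation errors
at those transmissions, and not on any earlier plant state. -/
theorem v_step_state_representation
    {n m : Type*} [Fintype n] [Fintype m] [DecidableEq n]
    (A : Matrix n n ℝ) (B : Matrix n m ℝ) (K : Matrix m n ℝ)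
    (v : ℕ) (hv : 1 ≤ v) (hABK : (A + B * K) ^ v = 0)
    (x e w : ℤ → n → ℝ) (η : ℕ → ℕ) (hη : ∀ l, 1 ≤ η l)
    (k : ℤ) (t : ℕ → ℤ) (ht : ∀ l, t l = k - ∑ j ∈ Finset.range l, (η j : ℤ))
    (hrec : ∀ l, l < v →
      x (t l) = ((A + B * K) ^ η l).mulVec (x (t (l + 1)))
        + (A ^ η l - (A + B * K) ^ η l).mulVec (e (t (l + 1)))
        + ∑ i ∈ Finset.range (η l), (A ^ i).mulVec (w (t l - (i + 1)))) :
    x k = ∑ l ∈ Finset.range v,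
      ((A + B * K) ^ (∑ j ∈ Finset.range l, η j)).mulVec
        (∑ i ∈ Finset.range (η l), (A ^ i).mulVec (w (t l - (i + 1)))
          + (A ^ η l - (A + B * K) ^ η l).mulVec (e (t (l + 1)))) := by
  have key : ∀ N, N ≤ v → x k =
      ((A + B * K) ^ (∑ j ∈ Finset.range N, η j)).mulVec (x (t N))
      + ∑ l ∈ Finset.range N,
        ((A + B * K) ^ (∑ j ∈ Finset.range l, η j)).mulVec
          (∑ i ∈ Finset.range (η l), (A ^ i).mulVec (w (t l - (i + 1)))
            + (A ^ η l - (A + B * K) ^ η l).mulVec (e (t (l + 1)))) := by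
    intro N
    induction N with
    | zero =>
      intro _
      have h0 : t 0 = k := by simp [ht 0]
      simp [h0]
    | succ N ih =>
      intro hN
      have hNv : N < v := hN
      rw [ih (le_of_lt hNv), hrec N hNv, Finset.sum_range_succ]
      simp only [mulVec_add, mulVec_mulVec, ← pow_add, Finset.sum_range_succ]
      abel
  have hfin := key v le_rfl
  have hle : v ≤ ∑ j ∈ Finset.range v, η j := by
    calc v = ∑ _j ∈ Finset.range v, 1 := by simp
    _ ≤ ∑ j ∈ Finset.range v, η j := Finset.sum_le_sum fun j _ => hη j
  have hz : (A + B * K) ^ (∑ j ∈ Finset.range v, η j) = 0 := by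
    obtain ⟨c, hc⟩ := Nat.exists_eq_add_of_le hle
    rw [hc, pow_add, hABK, zero_mul]
  rw [hfin, hz, zero_mulVec, zero_add]
end

section
/- Let n be a nonempty finite index type, A : Matrix n n ℝ, and Q, R : Matrix n n ℝ symmetric positive definite. Let ρ(A) denote the spectral radius of A and define c(j) := Tr(Q · ∑_{i=1}^{j} A^{i−1} R (Aᵀ)^{i−1}). Let p_s, p_c ∈ (0,1) satisfy p_s · ρ(A)² < 1 and p_c · ρ(A)² < 1. Then the expected per-cycle cost of the persistent uplink–downlink scheduling policy is finite: the family (n′, m, n) ↦ (1−p_c)² (1−p_s) · p_c^{n′−1} p_s^{m−1} p_c^{n−1} · ∑_{i=1}^{m+n} c(n′ + i), indexed by triples of positive integers (n′, m, n), is summable. -/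
open Matrix

/-- The spectral radius of a real square matrix: the supremum of the moduli of its
complex eigenvalues. -/
noncomputable def specRad {n : Type*} [Fintype n] [DecidableEq n]
    (A : Matrix n n ℝ) : ℝ :=
  sSup {r : ℝ | ∃ μ : ℂ, r = ‖μ‖ ∧
    ∃ v : n → ℂ, v ≠ 0 ∧ (A.map Complex.ofReal).mulVec v = μ • v}

section Aux

open Filter ENNReal NNReal Module.End

attribute [local instance] Matrix.linftyOpNormedAddCommGroup Matrix.linftyOpNormedRing
  Matrix.linftyOpNormedAlgebra

set_option linter.unusedSectionVars false

variable {n : Type*} [Fintype n] [Nonempty n] [DecidableEq n]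

private lemma specaux_mem_spectrum_iff (M : Matrix n n ℂ) (μ : ℂ) :
    μ ∈ spectrum ℂ M ↔ ∃ v : n → ℂ, v ≠ 0 ∧ M.mulVec v = μ • v := by
  rw [← AlgEquiv.spectrum_eq (Matrix.toLinAlgEquiv' : Matrix n n ℂ ≃ₐ[ℂ] _) M,
    ← Module.End.hasEigenvalue_iff_mem_spectrum]
  constructor
  · intro h
    obtain ⟨v, hv⟩ := h.exists_hasEigenvector
    exact ⟨v, hv.2, by simpa [Matrix.toLinAlgEquiv'_apply] using hv.apply_eq_smul⟩
  · rintro ⟨v, hv0, hv⟩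
    exact hasEigenvalue_of_hasEigenvector
      ⟨mem_eigenspace_iff.mpr (by simpa [Matrix.toLinAlgEquiv'_apply] using hv), hv0⟩

private lemma specaux_specRad_eq (A : Matrix n n ℝ) :
    specRad A = sSup ((‖·‖) '' spectrum ℂ (A.map Complex.ofReal)) := by
  unfold specRad
  congr 1
  ext r
  simp only [Set.mem_setOf_eq, Set.mem_image]
  constructor
  · rintro ⟨μ, rfl, hv⟩
    exact ⟨μ, (specaux_mem_spectrum_iff _ μ).mpr hv, rfl⟩
  · rintro ⟨μ, hμ, rfl⟩
    exact ⟨μ, rfl, (specaux_mem_spectrum_iff _ μ).mp hμ⟩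

private lemma specaux_bddAbove (M : Matrix n n ℂ) :
    BddAbove ((‖·‖) '' spectrum ℂ M) := by
  refine ⟨‖M‖, ?_⟩
  rintro x ⟨μ, hμ, rfl⟩
  exact spectrum.norm_le_norm_of_mem hμ

private lemma specaux_nonneg (A : Matrix n n ℝ) : 0 ≤ specRad A := by
  rw [specaux_specRad_eq]
  obtain ⟨μ, hμ⟩ := spectrum.nonempty (A.map Complex.ofReal)
  exact le_trans (norm_nonneg μ)
    (le_csSup (specaux_bddAbove _) ⟨μ, hμ, rfl⟩)

private lemma specaux_spectralRadius_le (A : Matrix n n ℝ) :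
    spectralRadius ℂ (A.map Complex.ofReal) ≤ ENNReal.ofReal (specRad A) := by
  rw [spectralRadius]
  refine iSup₂_le fun μ hμ => ?_
  have h1 : ‖μ‖ ≤ specRad A := by
    rw [specaux_specRad_eq]
    exact le_of_eq_of_le rfl (le_csSup (specaux_bddAbove _) ⟨μ, hμ, rfl⟩)
  calc (‖μ‖₊ : ℝ≥0∞) = ENNReal.ofReal ‖μ‖ := (ofReal_norm μ).symm
    _ ≤ _ := ENNReal.ofReal_le_ofReal h1

private lemma specaux_norm_map (B : Matrix n n ℝ) : ‖B.map Complex.ofReal‖ = ‖B‖ := by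
  rw [Matrix.linfty_opNorm_def, Matrix.linfty_opNorm_def]
  simp [Matrix.map_apply]

private lemma specaux_map_pow (A : Matrix n n ℝ) (l : ℕ) :
    (A.map Complex.ofReal) ^ l = (A ^ l).map Complex.ofReal := by
  have h : A.map Complex.ofReal =
      (Complex.ofRealHom.mapMatrix : Matrix n n ℝ →+* Matrix n n ℂ) A := rfl
  rw [h, ← map_pow]
  rfl

/-- Gelfand-type growth bound. -/
private lemma specaux_growth (A : Matrix n n ℝ) (t : ℝ) (ht : specRad A < t) :
    ∃ C : ℝ, 0 < C ∧ ∀ l : ℕ, ‖A ^ l‖ ≤ C * t ^ l := by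
  have ht0 : 0 < t := lt_of_le_of_lt (specaux_nonneg A) ht
  set M := A.map Complex.ofReal with hM
  have hlt : spectralRadius ℂ M < ENNReal.ofReal t :=
    lt_of_le_of_lt (specaux_spectralRadius_le A)
      ((ENNReal.ofReal_lt_ofReal_iff ht0).mpr ht)
  have hG := spectrum.pow_nnnorm_pow_one_div_tendsto_nhds_spectralRadius M
  have hev : ∀ᶠ l : ℕ in atTop, (‖M ^ l‖₊ : ℝ≥0∞) ^ (1 / (l : ℝ)) < ENNReal.ofReal t :=
    hG.eventually_lt_const hlt
  rw [eventually_atTop] at hev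
  obtain ⟨N, hN⟩ := hev
  have key : ∀ l : ℕ, N ≤ l → 1 ≤ l → ‖M ^ l‖ ≤ t ^ l := by
    intro l hl hl1
    have h := hN l hl
    have hl0 : (l : ℝ) ≠ 0 := by positivity
    have h2 : ((‖M ^ l‖₊ : ℝ≥0∞) ^ (1 / (l : ℝ))) ^ (l : ℝ) ≤ (ENNReal.ofReal t) ^ (l : ℝ) :=
      ENNReal.rpow_le_rpow h.le (by positivity)
    rw [← ENNReal.rpow_mul, one_div_mul_cancel hl0, ENNReal.rpow_one] at h2
    rw [ENNReal.rpow_natCast] at h2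
    have h3 : (‖M ^ l‖₊ : ℝ≥0∞) ≤ ENNReal.ofReal (t ^ l) := by
      rwa [ENNReal.ofReal_pow ht0.le]
    rw [ENNReal.ofReal] at h3
    have h4 : ‖M ^ l‖₊ ≤ (t ^ l).toNNReal := by exact_mod_cast h3
    calc ‖M ^ l‖ = ((‖M ^ l‖₊ : ℝ≥0) : ℝ) := rfl
      _ ≤ ((t ^ l).toNNReal : ℝ) := by exact_mod_cast h4
      _ ≤ t ^ l := (Real.coe_toNNReal _ (by positivity)).le
  have keyA : ∀ l : ℕ, N ≤ l → 1 ≤ l → ‖A ^ l‖ ≤ t ^ l := by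
    intro l hl hl1
    have := key l hl hl1
    rwa [hM, specaux_map_pow, specaux_norm_map] at this
  refine ⟨1 + ∑ l ∈ Finset.range (N + 1), ‖A ^ l‖ / t ^ l, by positivity, fun l => ?_⟩
  rcases lt_or_ge l (N + 1) with hlN | hlN
  · have h1 : ‖A ^ l‖ / t ^ l ≤ ∑ k ∈ Finset.range (N + 1), ‖A ^ k‖ / t ^ k :=
      Finset.single_le_sum (f := fun k => ‖A ^ k‖ / t ^ k) (fun k _ => by positivity)
        (Finset.mem_range.mpr hlN)
    have htl : (0:ℝ) < t ^ l := by positivity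
    rw [div_le_iff₀ htl] at h1
    nlinarith [norm_nonneg (A ^ l), htl]
  · have := keyA l (by omega) (by omega)
    have hC : (1:ℝ) ≤ 1 + ∑ k ∈ Finset.range (N + 1), ‖A ^ k‖ / t ^ k := by
      have : (0:ℝ) ≤ ∑ k ∈ Finset.range (N + 1), ‖A ^ k‖ / t ^ k :=
        Finset.sum_nonneg fun k _ => by positivity
      linarith
    nlinarith [pow_pos ht0 l]

private lemma specaux_entry_le (B : Matrix n n ℝ) (i j : n) : |B i j| ≤ ‖B‖ := by
  rw [Matrix.linfty_opNorm_def]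
  calc |B i j| = ((‖B i j‖₊ : ℝ≥0) : ℝ) := rfl
    _ ≤ ((∑ k, ‖B i k‖₊ : ℝ≥0) : ℝ) := by
        exact_mod_cast Finset.single_le_sum (f := fun k => ‖B i k‖₊)
          (fun k _ => zero_le) (Finset.mem_univ j)
    _ ≤ _ := by exact_mod_cast Finset.le_sup (f := fun i => ∑ k, ‖B i k‖₊) (Finset.mem_univ i)

private lemma specaux_norm_transpose_le (B : Matrix n n ℝ) :
    ‖Bᵀ‖ ≤ (Fintype.card n : ℝ) * ‖B‖ := by
  rw [Matrix.linfty_opNorm_def (A := Bᵀ)]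
  have hB : (0:ℝ) ≤ ‖B‖ := norm_nonneg _
  have : ∀ j : n, ((∑ i, ‖Bᵀ j i‖₊ : ℝ≥0) : ℝ) ≤ (Fintype.card n : ℝ) * ‖B‖ := by
    intro j
    push_cast
    calc ∑ i, ‖Bᵀ j i‖ ≤ ∑ _i : n, ‖B‖ :=
          Finset.sum_le_sum fun i _ => specaux_entry_le B i j
      _ = (Fintype.card n : ℝ) * ‖B‖ := by simp [Finset.card_univ, mul_comm]
  have hcard : (0:ℝ) ≤ (Fintype.card n : ℝ) * ‖B‖ := by positivity
  rw [show ((Fintype.card n : ℝ) * ‖B‖) = (((Fintype.card n : ℝ) * ‖B‖).toNNReal : ℝ) from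
    (Real.coe_toNNReal _ hcard).symm]
  norm_cast
  refine Finset.sup_le fun j _ => ?_
  have := this j
  rw [← NNReal.coe_le_coe]
  rwa [Real.coe_toNNReal _ hcard]

private lemma specaux_abs_trace_le (B : Matrix n n ℝ) :
    |B.trace| ≤ (Fintype.card n : ℝ) * ‖B‖ := by
  rw [Matrix.trace]
  calc |∑ i, B.diag i| ≤ ∑ i, |B.diag i| := Finset.abs_sum_le_sum_abs _ _
    _ ≤ ∑ _i : n, ‖B‖ := Finset.sum_le_sum fun i _ => specaux_entry_le B i i
    _ = (Fintype.card n : ℝ) * ‖B‖ := by simp [Finset.card_univ, mul_comm]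

private lemma specaux_trace_bound (A Q R : Matrix n n ℝ) (r C : ℝ) (hr : 1 < r) (hC : 0 < C)
    (hA : ∀ l : ℕ, ‖A ^ l‖ ^ 2 ≤ C * r ^ l) (j : ℕ) :
    |(Q * ∑ l ∈ Finset.range j, A ^ l * R * (Aᵀ) ^ l).trace| ≤
      (Fintype.card n : ℝ) ^ 2 * ‖Q‖ * ‖R‖ * C / (r - 1) * r ^ j := by
  have hr0 : (0:ℝ) < r := by linarith
  have hcard : (0:ℝ) < (Fintype.card n : ℝ) := by
    exact_mod_cast Fintype.card_pos
  set S := ∑ l ∈ Finset.range j, A ^ l * R * (Aᵀ) ^ l with hS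
  have hterm : ∀ l : ℕ, ‖A ^ l * R * (Aᵀ) ^ l‖ ≤ (Fintype.card n : ℝ) * ‖R‖ * (C * r ^ l) := by
    intro l
    have h1 : ‖A ^ l * R * (Aᵀ) ^ l‖ ≤ ‖A ^ l‖ * ‖R‖ * ‖(Aᵀ) ^ l‖ := by
      calc ‖A ^ l * R * (Aᵀ) ^ l‖ ≤ ‖A ^ l * R‖ * ‖(Aᵀ) ^ l‖ := Matrix.linfty_opNorm_mul _ _
        _ ≤ ‖A ^ l‖ * ‖R‖ * ‖(Aᵀ) ^ l‖ := by
            have := Matrix.linfty_opNorm_mul (A ^ l) R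
            have h0 : (0:ℝ) ≤ ‖(Aᵀ) ^ l‖ := norm_nonneg _
            nlinarith
    have h2 : ‖(Aᵀ) ^ l‖ ≤ (Fintype.card n : ℝ) * ‖A ^ l‖ := by
      rw [← Matrix.transpose_pow]
      exact specaux_norm_transpose_le _
    have h3 : ‖A ^ l‖ * ‖R‖ * ‖(Aᵀ) ^ l‖ ≤ (Fintype.card n : ℝ) * ‖R‖ * ‖A ^ l‖ ^ 2 := by
      have h4 : (0:ℝ) ≤ ‖A ^ l‖ := norm_nonneg _
      have h5 : (0:ℝ) ≤ ‖R‖ := norm_nonneg _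
      nlinarith [mul_le_mul_of_nonneg_left h2 (mul_nonneg h4 h5)]
    have h6 : (Fintype.card n : ℝ) * ‖R‖ * ‖A ^ l‖ ^ 2 ≤
        (Fintype.card n : ℝ) * ‖R‖ * (C * r ^ l) := by
      have := hA l
      have h5 : (0:ℝ) ≤ ‖R‖ := norm_nonneg _
      nlinarith [mul_le_mul_of_nonneg_left this (mul_nonneg hcard.le h5)]
    linarith
  have hSnorm : ‖S‖ ≤ (Fintype.card n : ℝ) * ‖R‖ * C * (r ^ j / (r - 1)) := by
    calc ‖S‖ ≤ ∑ l ∈ Finset.range j, ‖A ^ l * R * (Aᵀ) ^ l‖ := norm_sum_le _ _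
      _ ≤ ∑ l ∈ Finset.range j, (Fintype.card n : ℝ) * ‖R‖ * (C * r ^ l) :=
          Finset.sum_le_sum fun l _ => hterm l
      _ = (Fintype.card n : ℝ) * ‖R‖ * C * ∑ l ∈ Finset.range j, r ^ l := by
          rw [Finset.mul_sum]; ring_nf
      _ ≤ (Fintype.card n : ℝ) * ‖R‖ * C * (r ^ j / (r - 1)) := by
          have hgeom : ∑ l ∈ Finset.range j, r ^ l ≤ r ^ j / (r - 1) := by
            rw [geom_sum_eq (by linarith : r ≠ 1)]
            have h1 : (0:ℝ) < r - 1 := by linarith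
            rw [div_le_div_iff_of_pos_right h1]
            have : (0:ℝ) < r ^ j := by positivity
            linarith
          have hpos : (0:ℝ) ≤ (Fintype.card n : ℝ) * ‖R‖ * C := by positivity
          nlinarith
  calc |(Q * S).trace| ≤ (Fintype.card n : ℝ) * ‖Q * S‖ := specaux_abs_trace_le _
    _ ≤ (Fintype.card n : ℝ) * (‖Q‖ * ‖S‖) := by
        have := Matrix.linfty_opNorm_mul Q S
        nlinarith
    _ ≤ (Fintype.card n : ℝ) ^ 2 * ‖Q‖ * ‖R‖ * C / (r - 1) * r ^ j := by
        have hQ0 : (0:ℝ) ≤ ‖Q‖ := norm_nonneg _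
        have h1 : ‖Q‖ * ‖S‖ ≤ ‖Q‖ * ((Fintype.card n : ℝ) * ‖R‖ * C * (r ^ j / (r - 1))) := by
          nlinarith [norm_nonneg S]
        have h2 : (0:ℝ) < r - 1 := by linarith
        have : (Fintype.card n : ℝ) * (‖Q‖ * ((Fintype.card n : ℝ) * ‖R‖ * C * (r ^ j / (r - 1))))
            = (Fintype.card n : ℝ) ^ 2 * ‖Q‖ * ‖R‖ * C / (r - 1) * r ^ j := by
          field_simp
        nlinarith
end Aux


section Main

attribute [local instance] Matrix.linftyOpNormedAddCommGroup Matrix.linftyOpNormedRing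
  Matrix.linftyOpNormedAlgebra

set_option maxHeartbeats 2000000 in
/-- For the persistent uplink–downlink scheduling policy, if
`p_s · ρ(A)² < 1` and `p_c · ρ(A)² < 1`, the expected per-cycle cost is finite: the family
`(n', m, n) ↦ (1-p_c)²(1-p_s) p_c^{n'-1} p_s^{m-1} p_c^{n-1} ∑_{i=1}^{m+n} c(n'+i)`,
indexed by triples of positive integers, is summable, where
`c(j) = Tr(Q · ∑_{i=1}^{j} A^{i-1} R (Aᵀ)^{i-1})`. -/
theorem persistent_policy_expected_cycle_cost_summable
    {n : Type*} [Fintype n] [Nonempty n] [DecidableEq n]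
    (A Q R : Matrix n n ℝ) (hQ : Q.PosDef) (hR : R.PosDef)
    (ps pc : ℝ) (hps : ps ∈ Set.Ioo (0 : ℝ) 1) (hpc : pc ∈ Set.Ioo (0 : ℝ) 1)
    (hs : ps * specRad A ^ 2 < 1) (hc : pc * specRad A ^ 2 < 1) :
    Summable (fun x : ℕ+ × ℕ+ × ℕ+ =>
      (1 - pc) ^ 2 * (1 - ps) * pc ^ ((x.1 : ℕ) - 1) * ps ^ ((x.2.1 : ℕ) - 1)
        * pc ^ ((x.2.2 : ℕ) - 1)
        * ∑ i ∈ Finset.range ((x.2.1 : ℕ) + (x.2.2 : ℕ)),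
            (Q * ∑ l ∈ Finset.range ((x.1 : ℕ) + i + 1), A ^ l * R * (Aᵀ) ^ l).trace) := by
  obtain ⟨hps0, hps1⟩ := hps
  obtain ⟨hpc0, hpc1⟩ := hpc
  have hs0 : 0 ≤ specRad A := specaux_nonneg A
  set s : ℝ := specRad A with hsdef
  set q : ℝ := min (1/ps) (1/pc) with hqdef
  have hq1 : 1 < q := lt_min (one_lt_one_div hps0 hps1) (one_lt_one_div hpc0 hpc1)
  have hsq : s^2 < q := by
    refine lt_min ?_ ?_
    · rw [lt_div_iff₀ hps0]; linarith [hs]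
    · rw [lt_div_iff₀ hpc0]; linarith [hc]
  set r : ℝ := (max 1 (s^2) + q)/2 with hrdef
  have hmaxq : max 1 (s^2) < q := max_lt hq1 hsq
  have hr1 : 1 < r := by
    have h1 := le_max_left 1 (s^2)
    rw [hrdef]; linarith
  have hrs : s^2 < r := by
    have h1 := le_max_right 1 (s^2)
    rw [hrdef]; linarith
  have hrq : r < q := by rw [hrdef]; linarith
  have hr0 : (0:ℝ) < r := lt_trans one_pos hr1
  have hpsr : ps * r < 1 := by
    have h1 : r < 1/ps := lt_of_lt_of_le hrq (min_le_left _ _)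
    rw [lt_div_iff₀ hps0] at h1; linarith
  have hpcr : pc * r < 1 := by
    have h1 : r < 1/pc := lt_of_lt_of_le hrq (min_le_right _ _)
    rw [lt_div_iff₀ hpc0] at h1; linarith
  set t : ℝ := Real.sqrt r with htdef
  have htr : t^2 = r := Real.sq_sqrt hr0.le
  have hst : s < t := by
    rw [htdef]
    exact (Real.lt_sqrt hs0).mpr hrs
  obtain ⟨C, hC0, hC⟩ := specaux_growth A t hst
  have hA2 : ∀ l : ℕ, ‖A ^ l‖ ^ 2 ≤ C^2 * r ^ l := by
    intro l
    have h1 := hC l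
    have h2 : (0:ℝ) ≤ t := Real.sqrt_nonneg r
    have h3 : ‖A ^ l‖ ^ 2 ≤ (C * t ^ l) ^ 2 := by
      have h4 : (0:ℝ) ≤ ‖A ^ l‖ := norm_nonneg _
      nlinarith [pow_nonneg h2 l]
    calc ‖A ^ l‖ ^ 2 ≤ (C * t ^ l) ^ 2 := h3
      _ = C^2 * (t^2) ^ l := by rw [mul_pow, ← pow_mul, ← pow_mul, Nat.mul_comm]
      _ = C^2 * r ^ l := by rw [htr]
  set D : ℝ := (Fintype.card n : ℝ) ^ 2 * ‖Q‖ * ‖R‖ * C^2 / (r - 1) with hDdef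
  have hrm1 : (0:ℝ) < r - 1 := by linarith
  have hD0 : 0 ≤ D := by
    rw [hDdef]; positivity
  have htrace : ∀ j : ℕ,
      |(Q * ∑ l ∈ Finset.range j, A ^ l * R * (Aᵀ) ^ l).trace| ≤ D * r ^ j :=
    fun j => specaux_trace_bound A Q R r (C^2) hr1 (by positivity) hA2 j
  set P : ℝ := (1 - pc)^2 * (1 - ps) with hPdef
  have hP0 : 0 ≤ P := by rw [hPdef]; nlinarith
  set E : ℝ := P * D * r^4 / (r - 1) with hEdef
  have hE0 : 0 ≤ E := by rw [hEdef]; positivity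
  have hgeo : ∀ u : ℝ, 0 ≤ u → u < 1 → Summable (fun k : ℕ+ => u ^ ((k:ℕ) - 1)) := by
    intro u h0 h1
    have h2 : Summable (fun k : ℕ => u ^ k) := summable_geometric_of_lt_one h0 h1
    have h3 := h2.comp_injective PNat.natPred_injective
    exact h3
  set g : ℕ+ × ℕ+ × ℕ+ → ℝ := fun x =>
    (E * (pc*r) ^ ((x.1:ℕ) - 1)) *
      ((ps*r) ^ ((x.2.1:ℕ) - 1) * (pc*r) ^ ((x.2.2:ℕ) - 1)) with hgdef
  have hgsum : Summable g := by
    have h1 : Summable (fun k : ℕ+ => E * (pc*r) ^ ((k:ℕ) - 1)) :=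
      (hgeo (pc*r) (by positivity) hpcr).mul_left E
    have h2 : Summable (fun y : ℕ+ × ℕ+ => (ps*r) ^ ((y.1:ℕ) - 1) * (pc*r) ^ ((y.2:ℕ) - 1)) :=
      Summable.mul_of_nonneg (hgeo (ps*r) (by positivity) hpsr)
        (hgeo (pc*r) (by positivity) hpcr) (fun _ => by positivity) (fun _ => by positivity)
    exact Summable.mul_of_nonneg h1 h2 (fun k => by positivity) (fun y => by positivity)
  refine Summable.of_norm_bounded hgsum ?_
  rintro ⟨a, b, c⟩
  have ha1 : 1 ≤ (a:ℕ) := a.one_le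
  have hb1 : 1 ≤ (b:ℕ) := b.one_le
  have hc1 : 1 ≤ (c:ℕ) := c.one_le
  simp only [Real.norm_eq_abs]
  have hprefix : (0:ℝ) ≤ P * pc ^ ((a:ℕ) - 1) * ps ^ ((b:ℕ) - 1) * pc ^ ((c:ℕ) - 1) := by
    positivity
  have hT : |∑ i ∈ Finset.range ((b:ℕ) + (c:ℕ)),
      (Q * ∑ l ∈ Finset.range ((a:ℕ) + i + 1), A ^ l * R * (Aᵀ) ^ l).trace|
      ≤ D * r ^ ((a:ℕ) + 1 + ((b:ℕ) + (c:ℕ))) / (r - 1) := by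
    calc |∑ i ∈ Finset.range ((b:ℕ) + (c:ℕ)),
        (Q * ∑ l ∈ Finset.range ((a:ℕ) + i + 1), A ^ l * R * (Aᵀ) ^ l).trace|
        ≤ ∑ i ∈ Finset.range ((b:ℕ) + (c:ℕ)),
          |(Q * ∑ l ∈ Finset.range ((a:ℕ) + i + 1), A ^ l * R * (Aᵀ) ^ l).trace| :=
        Finset.abs_sum_le_sum_abs _ _
      _ ≤ ∑ i ∈ Finset.range ((b:ℕ) + (c:ℕ)), D * r ^ ((a:ℕ) + i + 1) :=
        Finset.sum_le_sum fun i _ => htrace _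
      _ = D * r ^ ((a:ℕ) + 1) * ∑ i ∈ Finset.range ((b:ℕ) + (c:ℕ)), r ^ i := by
        rw [Finset.mul_sum]
        refine Finset.sum_congr rfl fun i _ => ?_
        rw [show (a:ℕ) + i + 1 = (a:ℕ) + 1 + i by omega, pow_add]
        ring
      _ ≤ D * r ^ ((a:ℕ) + 1) * (r ^ ((b:ℕ) + (c:ℕ)) / (r - 1)) := by
        have hgeom : ∑ i ∈ Finset.range ((b:ℕ) + (c:ℕ)), r ^ i ≤
            r ^ ((b:ℕ) + (c:ℕ)) / (r - 1) := by
          rw [geom_sum_eq (by linarith : r ≠ 1)]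
          rw [div_le_div_iff_of_pos_right hrm1]
          have : (0:ℝ) < r ^ ((b:ℕ) + (c:ℕ)) := by positivity
          linarith
        have hpos : (0:ℝ) ≤ D * r ^ ((a:ℕ) + 1) := by positivity
        nlinarith
      _ = D * r ^ ((a:ℕ) + 1 + ((b:ℕ) + (c:ℕ))) / (r - 1) := by
        rw [pow_add]; ring
  calc |(1 - pc) ^ 2 * (1 - ps) * pc ^ ((a:ℕ) - 1) * ps ^ ((b:ℕ) - 1) * pc ^ ((c:ℕ) - 1)
        * ∑ i ∈ Finset.range ((b:ℕ) + (c:ℕ)),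
            (Q * ∑ l ∈ Finset.range ((a:ℕ) + i + 1), A ^ l * R * (Aᵀ) ^ l).trace|
      = P * pc ^ ((a:ℕ) - 1) * ps ^ ((b:ℕ) - 1) * pc ^ ((c:ℕ) - 1)
        * |∑ i ∈ Finset.range ((b:ℕ) + (c:ℕ)),
            (Q * ∑ l ∈ Finset.range ((a:ℕ) + i + 1), A ^ l * R * (Aᵀ) ^ l).trace| := by
        rw [abs_mul, abs_of_nonneg hprefix]
    _ ≤ P * pc ^ ((a:ℕ) - 1) * ps ^ ((b:ℕ) - 1) * pc ^ ((c:ℕ) - 1)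
        * (D * r ^ ((a:ℕ) + 1 + ((b:ℕ) + (c:ℕ))) / (r - 1)) :=
        mul_le_mul_of_nonneg_left hT hprefix
    _ = g (a, b, c) := by
        rw [hgdef]
        simp only
        have he : (a:ℕ) + 1 + ((b:ℕ) + (c:ℕ)) =
            ((a:ℕ) - 1) + ((b:ℕ) - 1) + ((c:ℕ) - 1) + 4 := by omega
        rw [he, hEdef]
        rw [pow_add, pow_add, pow_add, mul_pow, mul_pow, mul_pow]
        ring

end Main
end

section
/- Let n be a nonempty finite index type, A : Matrix n n ℝ, and Q, R : Matrix n n ℝ symmetric positive definite. Let ρ(A) denote the spectral radius of A and define c(j) := Tr(Q · ∑_{i=1}^{j} A^{i−1} R (Aᵀ)^{i−1}). Let p ∈ (0,1) satisfy p · ρ(A)⁴ < 1 (equivalently √p · ρ(A)² < 1). Then the series ∑_{i=1}^{∞} i^5 · c(2i) · p^i converges. -/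
open Matrix

section Aux

attribute [local instance] Matrix.frobeniusSeminormedAddCommGroup
  Matrix.frobeniusNormedAddCommGroup Matrix.frobeniusNormedSpace
  Matrix.frobeniusNormedRing Matrix.frobeniusNormedAlgebra

variable {n : Type*} [Fintype n] [Nonempty n] [DecidableEq n]

lemma specRadAux_mem_spectrum_iff (B : Matrix n n ℂ) (μ : ℂ) :
    μ ∈ spectrum ℂ B ↔ ∃ v : n → ℂ, v ≠ 0 ∧ B.mulVec v = μ • v := by
  rw [spectrum.mem_iff, Matrix.isUnit_iff_isUnit_det, isUnit_iff_ne_zero, not_not,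
    ← Matrix.exists_mulVec_eq_zero_iff]
  have key : ∀ v : n → ℂ, (algebraMap ℂ (Matrix n n ℂ) μ - B).mulVec v = μ • v - B.mulVec v := by
    intro v
    rw [Matrix.sub_mulVec, Algebra.algebraMap_eq_smul_one, Matrix.smul_mulVec,
      Matrix.one_mulVec]
  constructor
  · rintro ⟨v, hv, h⟩
    exact ⟨v, hv, by rw [key v, sub_eq_zero] at h; exact h.symm⟩
  · rintro ⟨v, hv, h⟩
    exact ⟨v, hv, by rw [key v, h, sub_self]⟩

end Aux

section Aux2
set_option linter.unusedSectionVars false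

attribute [local instance] Matrix.frobeniusSeminormedAddCommGroup
  Matrix.frobeniusNormedAddCommGroup Matrix.frobeniusNormedSpace
  Matrix.frobeniusNormedRing Matrix.frobeniusNormedAlgebra

variable {n : Type*} [Fintype n] [Nonempty n] [DecidableEq n]

lemma specRad_spec (A : Matrix n n ℝ) :
    (0 ≤ specRad A) ∧
      ∀ μ ∈ spectrum ℂ (A.map Complex.ofReal), ‖μ‖ ≤ specRad A := by
  set B := A.map Complex.ofReal with hB
  set S := {r : ℝ | ∃ μ : ℂ, r = ‖μ‖ ∧
    ∃ v : n → ℂ, v ≠ 0 ∧ B.mulVec v = μ • v} with hS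
  have hbdd : BddAbove S := by
    refine ⟨‖B‖ * ‖(1 : Matrix n n ℂ)‖, ?_⟩
    rintro r ⟨μ, rfl, v, hv, hmul⟩
    have hμ : μ ∈ spectrum ℂ B := (specRadAux_mem_spectrum_iff B μ).mpr ⟨v, hv, hmul⟩
    have := spectrum.subset_closedBall_norm_mul (𝕜 := ℂ) B hμ
    simpa using Metric.mem_closedBall.mp this
  obtain ⟨μ₀, hμ₀⟩ := spectrum.nonempty B
  obtain ⟨v₀, hv₀, hmul₀⟩ := (specRadAux_mem_spectrum_iff B μ₀).mp hμ₀
  have hmem : ‖μ₀‖ ∈ S := ⟨μ₀, rfl, v₀, hv₀, hmul₀⟩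
  constructor
  · exact le_trans (norm_nonneg μ₀) (le_csSup hbdd hmem)
  · intro μ hμ
    obtain ⟨v, hv, hmul⟩ := (specRadAux_mem_spectrum_iff B μ).mp hμ
    exact le_csSup hbdd ⟨μ, rfl, v, hv, hmul⟩

/-- Geometric bound on powers: for any `s` exceeding the spectral radius. -/
lemma specRad_pow_bound (A : Matrix n n ℝ) {s : ℝ} (hs : specRad A < s) :
    ∃ C : ℝ, 0 < C ∧ ∀ k : ℕ, ‖A ^ k‖ ≤ C * s ^ k := by
  obtain ⟨hρ0, hub⟩ := specRad_spec A
  have hs0 : 0 < s := lt_of_le_of_lt hρ0 hs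
  set B := A.map Complex.ofReal with hB
  have hBpow : ∀ k : ℕ, B ^ k = (A ^ k).map Complex.ofReal := by
    intro k
    have : B = (Complex.ofRealHom.mapMatrix : Matrix n n ℝ →+* Matrix n n ℂ) A := rfl
    rw [this, ← map_pow]; rfl
  have hnorm : ∀ k : ℕ, ‖B ^ k‖ = ‖A ^ k‖ := by
    intro k
    rw [hBpow k]
    exact Matrix.frobenius_norm_map_eq (A ^ k) _ (fun a => Complex.norm_real a)
  -- spectral radius < s
  have hlt : spectralRadius ℂ B < (s.toNNReal : ENNReal) := by
    apply spectrum.spectralRadius_lt_of_forall_lt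
    intro z hz
    have : ‖z‖ ≤ specRad A := hub z hz
    have h2 : ‖z‖ < s := lt_of_le_of_lt (by simpa using this) hs
    simpa [← NNReal.coe_lt_coe, Real.coe_toNNReal _ hs0.le] using h2
  have htend := spectrum.pow_nnnorm_pow_one_div_tendsto_nhds_spectralRadius B
  have hev : ∀ᶠ k : ℕ in Filter.atTop,
      (‖B ^ k‖₊ : ENNReal) ^ (1 / (k : ℝ)) < (s.toNNReal : ENNReal) :=
    htend.eventually_lt_const hlt
  obtain ⟨N, hN⟩ := hev.exists_forall_of_atTop
  -- for k ≥ max N 1, ‖A^k‖ ≤ s^k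
  have hgeo : ∀ k : ℕ, max N 1 ≤ k → ‖A ^ k‖ ≤ s ^ k := by
    intro k hk
    have hk1 : 1 ≤ k := le_trans (le_max_right N 1) hk
    have hkN : N ≤ k := le_trans (le_max_left N 1) hk
    have h := hN k hkN
    have hkpos : (0 : ℝ) < (k : ℝ) := by exact_mod_cast hk1
    have h2 : ((‖B ^ k‖₊ : ENNReal) ^ (1 / (k : ℝ))) ^ (k : ℝ)
        < ((s.toNNReal : ENNReal)) ^ (k : ℝ) := by
      exact ENNReal.rpow_lt_rpow h hkpos
    rw [← ENNReal.rpow_mul, one_div, inv_mul_cancel₀ hkpos.ne', ENNReal.rpow_one,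
      ENNReal.rpow_natCast, ← ENNReal.coe_pow, ENNReal.coe_lt_coe] at h2
    have h3 : ‖B ^ k‖ < s ^ k := by
      have := (NNReal.coe_lt_coe).mpr h2
      simpa [Real.coe_toNNReal _ hs0.le] using this
    rw [hnorm k] at h3
    exact h3.le
  set M := max N 1
  set C := 1 + ∑ k ∈ Finset.range M, ‖A ^ k‖ / s ^ k with hC
  have hCpos : 0 < C := by
    have : 0 ≤ ∑ k ∈ Finset.range M, ‖A ^ k‖ / s ^ k :=
      Finset.sum_nonneg fun k _ => div_nonneg (norm_nonneg _) (pow_nonneg hs0.le k)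
    rw [hC]; linarith
  refine ⟨C, hCpos, fun k => ?_⟩
  by_cases hk : M ≤ k
  · calc ‖A ^ k‖ ≤ s ^ k := hgeo k hk
      _ ≤ C * s ^ k := le_mul_of_one_le_left (pow_nonneg hs0.le k) (by
          have : 0 ≤ ∑ j ∈ Finset.range M, ‖A ^ j‖ / s ^ j :=
            Finset.sum_nonneg fun j _ => div_nonneg (norm_nonneg _) (pow_nonneg hs0.le j)
          rw [hC]; linarith)
  · push_neg at hk
    have hterm : ‖A ^ k‖ / s ^ k ≤ C := by
      have hle : ‖A ^ k‖ / s ^ k ≤ ∑ j ∈ Finset.range M, ‖A ^ j‖ / s ^ j :=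
        Finset.single_le_sum (f := fun j => ‖A ^ j‖ / s ^ j)
          (fun j _ => div_nonneg (norm_nonneg _) (pow_nonneg hs0.le j))
          (Finset.mem_range.mpr hk)
      rw [hC]; linarith
    calc ‖A ^ k‖ = ‖A ^ k‖ / s ^ k * s ^ k := by
          field_simp
      _ ≤ C * s ^ k := mul_le_mul_of_nonneg_right hterm (pow_nonneg hs0.le k)

end Aux2

section Aux3
set_option linter.unusedSectionVars false

attribute [local instance] Matrix.frobeniusSeminormedAddCommGroup
  Matrix.frobeniusNormedAddCommGroup Matrix.frobeniusNormedSpace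
  Matrix.frobeniusNormedRing Matrix.frobeniusNormedAlgebra

variable {n : Type*} [Fintype n] [Nonempty n] [DecidableEq n]

lemma frob_entry_abs_le (M : Matrix n n ℝ) (i j : n) : |M i j| ≤ ‖M‖ := by
  have hdef : ‖M‖ = Real.sqrt (∑ a, ∑ b, ‖M a b‖ ^ (2 : ℝ)) := by
    rw [Matrix.frobenius_norm_def, Real.sqrt_eq_rpow]
  rw [hdef]
  have h1 : |M i j| = Real.sqrt (‖M i j‖ ^ (2 : ℝ)) := by
    rw [Real.rpow_two, Real.sqrt_sq_eq_abs, Real.norm_eq_abs, abs_abs]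
  rw [h1]
  apply Real.sqrt_le_sqrt
  calc ‖M i j‖ ^ (2 : ℝ) ≤ ∑ b, ‖M i b‖ ^ (2 : ℝ) :=
        Finset.single_le_sum (f := fun b => ‖M i b‖ ^ (2 : ℝ))
          (fun b _ => Real.rpow_nonneg (norm_nonneg _) _) (Finset.mem_univ j)
    _ ≤ ∑ a, ∑ b, ‖M a b‖ ^ (2 : ℝ) :=
        Finset.single_le_sum (f := fun a => ∑ b, ‖M a b‖ ^ (2 : ℝ))
          (fun a _ => Finset.sum_nonneg fun b _ => Real.rpow_nonneg (norm_nonneg _) _)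
          (Finset.mem_univ i)

lemma abs_trace_le_frob (M : Matrix n n ℝ) : |M.trace| ≤ (Fintype.card n : ℝ) * ‖M‖ := by
  calc |M.trace| = |∑ i, M i i| := by rw [Matrix.trace]; rfl
    _ ≤ ∑ i, |M i i| := Finset.abs_sum_le_sum_abs _ _
    _ ≤ ∑ _i : n, ‖M‖ := Finset.sum_le_sum fun i _ => frob_entry_abs_le M i i
    _ = (Fintype.card n : ℝ) * ‖M‖ := by
        rw [Finset.sum_const, Finset.card_univ, nsmul_eq_mul]

end Aux3


section Main
set_option linter.unusedSectionVars false
set_option maxHeartbeats 1000000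

attribute [local instance] Matrix.frobeniusSeminormedAddCommGroup
  Matrix.frobeniusNormedAddCommGroup Matrix.frobeniusNormedSpace
  Matrix.frobeniusNormedRing Matrix.frobeniusNormedAlgebra

/-- If `p ∈ (0,1)` with `p · ρ(A)⁴ < 1`, then the series
`∑_{i ≥ 1} i^5 c(2i) p^i` converges, where
`c(j) = Tr(Q · ∑_{i=1}^{j} A^{i-1} R (Aᵀ)^{i-1})`. -/
theorem naive_policy_dominating_series_summable
    {n : Type*} [Fintype n] [Nonempty n] [DecidableEq n]
    (A Q R : Matrix n n ℝ) (hQ : Q.PosDef) (hR : R.PosDef)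
    (p : ℝ) (hp : p ∈ Set.Ioo (0 : ℝ) 1) (hρ : p * specRad A ^ 4 < 1) :
    Summable (fun i : ℕ =>
      ((i + 1 : ℕ) : ℝ) ^ 5
        * (Q * ∑ l ∈ Finset.range (2 * (i + 1)), A ^ l * R * (Aᵀ) ^ l).trace
        * p ^ (i + 1)) := by
  obtain ⟨hp0, hp1⟩ := hp
  set ρ := specRad A with hρdef
  have hρ0 : 0 ≤ ρ := (specRad_spec A).1
  have hρ4 : ρ ^ 4 < p⁻¹ := by
    nlinarith [mul_inv_cancel₀ hp0.ne', mul_pos hp0 (inv_pos.mpr hp0)]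
  set u := max 1 ((ρ ^ 4 + p⁻¹) / 2) with hu
  have hu1 : (1 : ℝ) ≤ u := le_max_left _ _
  have hu0 : (0 : ℝ) < u := lt_of_lt_of_le one_pos hu1
  have hu_lt : u < p⁻¹ := by
    apply max_lt
    · exact (one_lt_inv₀ hp0).mpr hp1
    · linarith
  set s := u ^ (((4 : ℕ) : ℝ))⁻¹ with hs
  have hs4 : s ^ (4 : ℕ) = u := Real.rpow_inv_natCast_pow hu0.le (by norm_num)
  have hs1 : (1 : ℝ) ≤ s := Real.one_le_rpow hu1 (by positivity)
  have hs0 : (0 : ℝ) < s := lt_of_lt_of_le one_pos hs1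
  have hρs : ρ < s := by
    rcases lt_or_ge ρ 1 with h | h
    · exact lt_of_lt_of_le h hs1
    · have h4 : ρ ^ 4 < s ^ 4 := by
        rw [hs4]
        calc ρ ^ 4 < (ρ ^ 4 + p⁻¹) / 2 := by linarith
          _ ≤ u := le_max_right _ _
      exact lt_of_pow_lt_pow_left₀ 4 hs0.le h4
  have hps4 : p * s ^ 4 < 1 := by
    rw [hs4]
    calc p * u < p * p⁻¹ := mul_lt_mul_of_pos_left hu_lt hp0
      _ = 1 := mul_inv_cancel₀ hp0.ne'
  have hps4_0 : 0 ≤ p * s ^ 4 := by positivity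
  obtain ⟨C, hC0, hCb⟩ := specRad_pow_bound A hρs
  set r := p * s ^ 4 with hr
  set K := (Fintype.card n : ℝ) * ‖Q‖ * ‖R‖ * C ^ 2 * 2 with hK
  -- summable majorant
  have h6 : Summable fun m : ℕ => (m : ℝ) ^ 6 * r ^ m :=
    summable_pow_mul_geometric_of_norm_lt_one 6
      (by rw [Real.norm_eq_abs, abs_of_nonneg hps4_0]; exact hps4)
  have hg : Summable fun i : ℕ => K * (((i + 1 : ℕ) : ℝ) ^ 6 * r ^ (i + 1)) :=
    (h6.mul_left K).comp_injective (add_left_injective 1)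
  refine Summable.of_norm_bounded hg fun i => ?_
  set m := i + 1 with hm
  -- per-term bound on the sum of matrices
  have hSnorm : ‖∑ l ∈ Finset.range (2 * m), A ^ l * R * (Aᵀ) ^ l‖
      ≤ ((2 * m : ℕ) : ℝ) * (C ^ 2 * ‖R‖ * s ^ (4 * m)) := by
    calc ‖∑ l ∈ Finset.range (2 * m), A ^ l * R * (Aᵀ) ^ l‖
        ≤ ∑ l ∈ Finset.range (2 * m), ‖A ^ l * R * (Aᵀ) ^ l‖ := norm_sum_le _ _
      _ ≤ ∑ _l ∈ Finset.range (2 * m), C ^ 2 * ‖R‖ * s ^ (4 * m) := by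
          apply Finset.sum_le_sum
          intro l hl
          have hl2 : 2 * l ≤ 4 * m := by
            have := Finset.mem_range.mp hl; omega
          have hAl := hCb l
          have hAl0 : 0 ≤ ‖A ^ l‖ := norm_nonneg _
          have hR0 : 0 ≤ ‖R‖ := norm_nonneg _
          have hsl0 : 0 ≤ s ^ l := pow_nonneg hs0.le l
          calc ‖A ^ l * R * (Aᵀ) ^ l‖ ≤ ‖A ^ l * R‖ * ‖(Aᵀ) ^ l‖ := norm_mul_le _ _
            _ ≤ ‖A ^ l‖ * ‖R‖ * ‖(Aᵀ) ^ l‖ :=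
                mul_le_mul_of_nonneg_right (norm_mul_le _ _) (norm_nonneg _)
            _ = ‖A ^ l‖ * ‖R‖ * ‖A ^ l‖ := by
                rw [← Matrix.transpose_pow, Matrix.frobenius_norm_transpose]
            _ ≤ (C * s ^ l) * ‖R‖ * (C * s ^ l) := by gcongr
            _ = C ^ 2 * ‖R‖ * s ^ (2 * l) := by rw [two_mul, pow_add]; ring
            _ ≤ C ^ 2 * ‖R‖ * s ^ (4 * m) := by
                have := pow_le_pow_right₀ hs1 hl2
                gcongr
      _ = ((2 * m : ℕ) : ℝ) * (C ^ 2 * ‖R‖ * s ^ (4 * m)) := by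
          rw [Finset.sum_const, Finset.card_range, nsmul_eq_mul]
  have htr : |(Q * ∑ l ∈ Finset.range (2 * m), A ^ l * R * (Aᵀ) ^ l).trace|
      ≤ (Fintype.card n : ℝ) * (‖Q‖ * (((2 * m : ℕ) : ℝ) * (C ^ 2 * ‖R‖ * s ^ (4 * m)))) := by
    calc |(Q * ∑ l ∈ Finset.range (2 * m), A ^ l * R * (Aᵀ) ^ l).trace|
        ≤ (Fintype.card n : ℝ) * ‖Q * ∑ l ∈ Finset.range (2 * m), A ^ l * R * (Aᵀ) ^ l‖ :=
          abs_trace_le_frob _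
      _ ≤ (Fintype.card n : ℝ) * (‖Q‖ * ‖∑ l ∈ Finset.range (2 * m), A ^ l * R * (Aᵀ) ^ l‖) :=
          mul_le_mul_of_nonneg_left (norm_mul_le _ _) (Nat.cast_nonneg _)
      _ ≤ (Fintype.card n : ℝ) * (‖Q‖ * (((2 * m : ℕ) : ℝ) * (C ^ 2 * ‖R‖ * s ^ (4 * m)))) := by
          gcongr
  have hpow : r ^ m = p ^ m * s ^ (4 * m) := by
    rw [hr, mul_pow, pow_mul]
  rw [Real.norm_eq_abs, abs_mul, abs_mul,
    abs_of_nonneg (pow_nonneg (Nat.cast_nonneg m) 5),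
    abs_of_nonneg (pow_nonneg hp0.le m)]
  calc ((m : ℕ) : ℝ) ^ 5 * |(Q * ∑ l ∈ Finset.range (2 * m), A ^ l * R * (Aᵀ) ^ l).trace| * p ^ m
      ≤ ((m : ℕ) : ℝ) ^ 5
          * ((Fintype.card n : ℝ) * (‖Q‖ * (((2 * m : ℕ) : ℝ) * (C ^ 2 * ‖R‖ * s ^ (4 * m)))))
          * p ^ m := by
        gcongr
    _ = K * (((m : ℕ) : ℝ) ^ 6 * r ^ m) := by
        rw [hpow, hK]
        push_cast
        ring


end Main
end

section
/- Let p ∈ (0,1) and let c : ℕ → ℝ be nonnegative. If the series ∑_{j=1}^{∞} p^j · (∑_{i=2}^{2j+1} c(i)) converges, then the series ∑_{i=0}^{∞} c(i) (√p)^i converges. -/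
/-- Necessity step for the naive alternating policy: if
`∑_{j ≥ 1} p^j (∑_{i=2}^{2j+1} c(i))` converges, then `∑ c(i) (√p)^i` converges. -/
theorem summable_sqrt_of_summable_cycle_cost
    (p : ℝ) (hp : p ∈ Set.Ioo (0 : ℝ) 1) (c : ℕ → ℝ) (hc : ∀ i, 0 ≤ c i)
    (h : Summable (fun j : ℕ => p ^ (j + 1) * ∑ i ∈ Finset.Icc 2 (2 * (j + 1) + 1), c i)) :
    Summable (fun i : ℕ => c i * Real.sqrt p ^ i) := by
  obtain ⟨hp0, hp1⟩ := hp
  set f : ℕ → ℝ := fun j : ℕ => p ^ (j + 1) * ∑ i ∈ Finset.Icc 2 (2 * (j + 1) + 1), c i with hf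
  -- g i = f (i / 2) is summable
  have hg : Summable (fun i : ℕ => f (i / 2)) := by
    apply Summable.even_add_odd
    · simpa using h.congr (fun n => by norm_num [Nat.mul_div_cancel_left])
    · apply h.congr
      intro n
      have : (2 * n + 1) / 2 = n := by omega
      rw [this]
  rw [← summable_nat_add_iff 2]
  refine Summable.of_nonneg_of_le ?_ ?_ hg
  · intro i
    exact mul_nonneg (hc _) (pow_nonneg (Real.sqrt_nonneg _) _)
  · intro i
    have hs0 : (0:ℝ) ≤ Real.sqrt p := Real.sqrt_nonneg _
    have hs1 : Real.sqrt p ≤ 1 := Real.sqrt_le_one.2 (le_of_lt hp1)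
    have hsq : Real.sqrt p ^ 2 = p := Real.sq_sqrt (le_of_lt hp0)
    have h1 : Real.sqrt p ^ (i + 2) ≤ p ^ (i / 2 + 1) := by
      calc Real.sqrt p ^ (i + 2) ≤ Real.sqrt p ^ (2 * (i / 2 + 1)) :=
            pow_le_pow_of_le_one hs0 hs1 (by omega)
        _ = p ^ (i / 2 + 1) := by rw [pow_mul, hsq]
    have h2 : c (i + 2) ≤ ∑ k ∈ Finset.Icc 2 (2 * (i / 2 + 1) + 1), c k := by
      apply Finset.single_le_sum (fun k _ => hc k)
      simp only [Finset.mem_Icc]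
      omega
    calc c (i + 2) * Real.sqrt p ^ (i + 2)
        ≤ (∑ k ∈ Finset.Icc 2 (2 * (i / 2 + 1) + 1), c k) * p ^ (i / 2 + 1) :=
          mul_le_mul h2 h1 (pow_nonneg hs0 _) (Finset.sum_nonneg fun k _ => hc k)
      _ = f (i / 2) := by rw [hf]; ring
end

section
/- Let n be a nonempty finite index type, A : Matrix n n ℝ, and Q, R : Matrix n n ℝ symmetric positive definite. Let μ ∈ ℂ be an eigenvalue of A (i.e., of the complexification of A). Then there exists a constant κ > 0 such that for every natural number m, Tr(Q · A^m R (Aᵀ)^m) ≥ κ · |μ|^{2m}. -/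
open Matrix

section Aux

variable {n : Type*} [Fintype n] [Nonempty n] [DecidableEq n]

/-- Rayleigh-type lower bound for a positive definite real matrix. -/
lemma rayleigh_posDef {Q : Matrix n n ℝ} (hQ : Q.PosDef) :
    ∃ c > (0:ℝ), ∀ x : n → ℝ, c * (x ⬝ᵥ x) ≤ x ⬝ᵥ (Q *ᵥ x) := by
  classical
  set f : EuclideanSpace ℝ n → ℝ := fun x => (x : n → ℝ) ⬝ᵥ (Q *ᵥ (x : n → ℝ)) with hfdef
  have hf : Continuous f := by
    have : f = fun x : EuclideanSpace ℝ n => ∑ i, x i * ∑ j, Q i j * x j := by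
      funext x; simp [hfdef, dotProduct, Matrix.mulVec, dotProduct]
    rw [this]
    refine continuous_finset_sum _ fun i _ => ?_
    fun_prop
  obtain ⟨i0⟩ := (inferInstance : Nonempty n)
  have hne : (Metric.sphere (0 : EuclideanSpace ℝ n) 1).Nonempty := by
    refine ⟨EuclideanSpace.single i0 (1:ℝ), ?_⟩
    simp [mem_sphere_iff_norm]
  obtain ⟨x₀, hx₀S, hmin⟩ :=
    (isCompact_sphere (0 : EuclideanSpace ℝ n) 1).exists_isMinOn hne hf.continuousOn
  have hx₀norm : ‖x₀‖ = 1 := by simpa [mem_sphere_iff_norm] using hx₀S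
  have hx₀ne : (x₀ : n → ℝ) ≠ 0 := by
    intro h
    have : x₀ = 0 := by simpa using h
    rw [this] at hx₀norm; simp at hx₀norm
  have hc : 0 < f x₀ := by
    have := hQ.dotProduct_mulVec_pos hx₀ne
    simpa [hfdef] using this
  refine ⟨f x₀, hc, fun x => ?_⟩
  by_cases hx : x = 0
  · simp [hx]
  · have hxx : 0 < x ⬝ᵥ x := by
      have hnn : (0:ℝ) ≤ x ⬝ᵥ x := Finset.sum_nonneg fun i _ => mul_self_nonneg _
      rcases hnn.lt_or_eq with h | h
      · exact h
      · exact absurd ((dotProduct_self_eq_zero).mp h.symm) hx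
    set s := Real.sqrt (x ⬝ᵥ x) with hs
    have hspos : 0 < s := Real.sqrt_pos.mpr hxx
    have hs2 : s * s = x ⬝ᵥ x := Real.mul_self_sqrt hxx.le
    set y : EuclideanSpace ℝ n := WithLp.toLp 2 (s⁻¹ • x : n → ℝ) with hy
    have hyS : y ∈ Metric.sphere (0 : EuclideanSpace ℝ n) 1 := by
      rw [mem_sphere_iff_norm, sub_zero, EuclideanSpace.norm_eq]
      have : ∑ i, ‖y i‖ ^ 2 = s⁻¹ * s⁻¹ * (x ⬝ᵥ x) := by
        simp only [hy, PiLp.toLp_apply, Pi.smul_apply, smul_eq_mul, norm_mul, Real.norm_eq_abs, mul_pow,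
          sq_abs, dotProduct, Finset.mul_sum]
        ring_nf
      rw [this, ← hs2]
      have : s⁻¹ * s⁻¹ * (s * s) = 1 := by field_simp
      rw [this, Real.sqrt_one]
    have hmin' : f x₀ ≤ f y := hmin hyS
    have hfy : f y = s⁻¹ * (s⁻¹ * (x ⬝ᵥ (Q *ᵥ x))) := by
      simp [hfdef, hy, smul_dotProduct, Matrix.mulVec_smul, dotProduct_smul, smul_eq_mul]
    rw [hfy] at hmin'
    have h1 := mul_le_mul_of_nonneg_left hmin' (mul_pos hspos hspos).le
    have h2 : s * s * (s⁻¹ * (s⁻¹ * (x ⬝ᵥ (Q *ᵥ x)))) = x ⬝ᵥ (Q *ᵥ x) := by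
      field_simp
    rw [h2] at h1
    calc f x₀ * (x ⬝ᵥ x) = s * s * f x₀ := by rw [← hs2]; ring
      _ ≤ x ⬝ᵥ (Q *ᵥ x) := h1

/-- Trace bound from the Rayleigh inequality. -/
lemma trace_mul_mul_transpose_le {Q : Matrix n n ℝ} {c : ℝ}
    (h : ∀ x : n → ℝ, c * (x ⬝ᵥ x) ≤ x ⬝ᵥ (Q *ᵥ x)) (B : Matrix n n ℝ) :
    c * (B * Bᵀ).trace ≤ (Q * (B * Bᵀ)).trace := by
  have h1 : (Q * (B * Bᵀ)).trace = (Bᵀ * (Q * B)).trace := by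
    rw [← Matrix.mul_assoc, trace_mul_cycle, Matrix.mul_assoc]
  have h2 : (B * Bᵀ).trace = (Bᵀ * B).trace := trace_mul_comm _ _
  have e1 : (Bᵀ * (Q * B)).trace
      = ∑ j, (fun i => B i j) ⬝ᵥ (Q *ᵥ (fun i => B i j)) := by
    simp [Matrix.trace, Matrix.diag, Matrix.mul_apply, Matrix.mulVec, dotProduct,
      Matrix.transpose_apply]
  have e2 : (Bᵀ * B).trace = ∑ j, (fun i => B i j) ⬝ᵥ (fun i => B i j) := by
    simp [Matrix.trace, Matrix.diag, Matrix.mul_apply, dotProduct, Matrix.transpose_apply]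
  rw [h1, h2, e1, e2, Finset.mul_sum]
  exact Finset.sum_le_sum fun j _ => h _

/-- Eigenvalue-based lower bound for the sum of squared entries of `A ^ m`. -/
lemma abs_pow_le_sum_sq {A : Matrix n n ℝ} {μ : ℂ} {v : n → ℂ} (hv : v ≠ 0)
    (hAv : (A.map Complex.ofReal) *ᵥ v = μ • v) (m : ℕ) :
    ‖μ‖ ^ (2 * m) ≤ ∑ i, ∑ j, ((A ^ m) i j) ^ 2 := by
  classical
  have hpow : ∀ k : ℕ, (A.map Complex.ofReal) ^ k *ᵥ v = μ ^ k • v := by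
    intro k
    induction k with
    | zero => simp
    | succ k ih =>
        rw [pow_succ', ← Matrix.mulVec_mulVec, ih, Matrix.mulVec_smul, hAv, smul_smul,
          ← pow_succ]
  have hpow := hpow m
  have hM : (A ^ m).map Complex.ofReal = (A.map Complex.ofReal) ^ m := by
    exact
      (map_pow (Complex.ofRealHom.mapMatrix : Matrix n n ℝ →+* Matrix n n ℂ) A m)
  set N := ∑ j, ‖v j‖ ^ 2 with hN
  have hNpos : 0 < N := by
    obtain ⟨j0, hj0⟩ := Function.ne_iff.mp hv
    refine Finset.sum_pos' (fun j _ => by positivity) ⟨j0, Finset.mem_univ _, ?_⟩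
    have : ‖v j0‖ ≠ 0 := by simpa using hj0
    positivity
  have key : ∀ i, ‖((A ^ m).map Complex.ofReal *ᵥ v) i‖ ^ 2
      ≤ (∑ j, ((A ^ m) i j) ^ 2) * N := by
    intro i
    have step1 : ‖((A ^ m).map Complex.ofReal *ᵥ v) i‖
        ≤ ∑ j, ‖((A ^ m) i j : ℂ)‖ * ‖v j‖ := by
      simp only [Matrix.mulVec, dotProduct, Matrix.map_apply]
      refine le_trans ?_ (le_of_eq (Finset.sum_congr rfl fun j _ =>
        (norm_mul _ _)))
      simpa using
        norm_sum_le Finset.univ (fun j => ((A ^ m) i j : ℂ) * v j)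
    have step2 : (∑ j, ‖((A ^ m) i j : ℂ)‖ * ‖v j‖) ^ 2
        ≤ (∑ j, ‖((A ^ m) i j : ℂ)‖ ^ 2) * N := by
      simpa [hN] using Finset.sum_mul_sq_le_sq_mul_sq Finset.univ
        (fun j => ‖((A ^ m) i j : ℂ)‖) (fun j => ‖v j‖)
    have habs : (∑ j, ‖((A ^ m) i j : ℂ)‖ ^ 2) = ∑ j, ((A ^ m) i j) ^ 2 := by
      refine Finset.sum_congr rfl fun j _ => ?_
      rw [Complex.norm_real, Real.norm_eq_abs, sq_abs]
    calc ‖((A ^ m).map Complex.ofReal *ᵥ v) i‖ ^ 2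
        ≤ (∑ j, ‖((A ^ m) i j : ℂ)‖ * ‖v j‖) ^ 2 := by
          apply pow_le_pow_left₀ (by positivity) step1
      _ ≤ (∑ j, ‖((A ^ m) i j : ℂ)‖ ^ 2) * N := step2
      _ = (∑ j, ((A ^ m) i j) ^ 2) * N := by rw [habs]
  have lhs_eq : ∑ i, ‖((A ^ m).map Complex.ofReal *ᵥ v) i‖ ^ 2
      = ‖μ‖ ^ (2 * m) * N := by
    rw [hM, hpow]
    have e : ∀ i : n, ‖(μ ^ m • v) i‖ ^ 2
        = ‖μ‖ ^ (2 * m) * ‖v i‖ ^ 2 := by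
      intro i
      have : ‖(μ ^ m • v) i‖ = ‖μ‖ ^ m * ‖v i‖ := by
        simp [Pi.smul_apply, smul_eq_mul, norm_mul, norm_pow]
      rw [this, mul_pow, ← pow_mul, mul_comm m 2]
    rw [Finset.sum_congr rfl fun i _ => e i, ← Finset.mul_sum]
  have total : ‖μ‖ ^ (2 * m) * N ≤ (∑ i, ∑ j, ((A ^ m) i j) ^ 2) * N := by
    rw [← lhs_eq, Finset.sum_mul]
    exact Finset.sum_le_sum fun i _ => key i
  exact le_of_mul_le_mul_right total hNpos

end Aux

/-- If `μ` is a complex eigenvalue of `A`, then there exists `κ > 0`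
such that `Tr(Q · A^m R (Aᵀ)^m) ≥ κ · |μ|^{2m}` for all `m`. -/
theorem trace_pow_lower_bound_of_eigenvalue
    {n : Type*} [Fintype n] [Nonempty n] [DecidableEq n]
    (A Q R : Matrix n n ℝ) (hQ : Q.PosDef) (hR : R.PosDef)
    (μ : ℂ) (hμ : ∃ v : n → ℂ, v ≠ 0 ∧ (A.map Complex.ofReal).mulVec v = μ • v) :
    ∃ κ > (0 : ℝ), ∀ m : ℕ,
      κ * ‖μ‖ ^ (2 * m) ≤ (Q * (A ^ m * R * (Aᵀ) ^ m)).trace := by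
  classical
  obtain ⟨v, hv, hAv⟩ := hμ
  obtain ⟨cQ, hcQ, hQr⟩ := rayleigh_posDef hQ
  obtain ⟨cR, hcR, hRr⟩ := rayleigh_posDef hR
  refine ⟨cQ * cR, mul_pos hcQ hcR, fun m => ?_⟩
  open scoped MatrixOrder in
  set T := CFC.sqrt R with hT
  open scoped MatrixOrder in
  have hTT : T * T = R := CFC.sqrt_mul_sqrt_self R hR.posSemidef.nonneg
  open scoped MatrixOrder in
  have hTsymm : Tᵀ = T := by
    rw [← conjTranspose_eq_transpose_of_trivial]
    exact (CFC.sqrt_nonneg R).posSemidef.isHermitian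
  set B := A ^ m * T with hB
  have hBB : B * Bᵀ = A ^ m * R * (Aᵀ) ^ m := by
    rw [hB, Matrix.transpose_mul, hTsymm, Matrix.transpose_pow, Matrix.mul_assoc,
      ← Matrix.mul_assoc T T _, hTT, ← Matrix.mul_assoc]
  set B' := (Aᵀ) ^ m with hB'
  have hB'B' : B' * B'ᵀ = (Aᵀ) ^ m * A ^ m := by
    rw [hB', Matrix.transpose_pow, Matrix.transpose_transpose]
  have cyc : (A ^ m * R * (Aᵀ) ^ m).trace = (R * (B' * B'ᵀ)).trace := by
    rw [hB'B', trace_mul_cycle, ← Matrix.mul_assoc, trace_mul_comm, Matrix.mul_assoc]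
  have eS : (B' * B'ᵀ).trace = ∑ i, ∑ j, ((A ^ m) i j) ^ 2 := by
    rw [hB'B', ← Matrix.transpose_pow]
    simp only [Matrix.trace, Matrix.diag, Matrix.mul_apply, Matrix.transpose_apply, sq]
    exact Finset.sum_comm
  have hEig := abs_pow_le_sum_sq hv hAv m
  have s1 : cR * ‖μ‖ ^ (2 * m) ≤ cR * (B' * B'ᵀ).trace := by
    rw [eS]; exact mul_le_mul_of_nonneg_left hEig hcR.le
  have s2 : cR * (B' * B'ᵀ).trace ≤ (R * (B' * B'ᵀ)).trace :=
    trace_mul_mul_transpose_le hRr B'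
  have s3 : cQ * (B * Bᵀ).trace ≤ (Q * (B * Bᵀ)).trace :=
    trace_mul_mul_transpose_le hQr B
  have s4 : cR * ‖μ‖ ^ (2 * m) ≤ (B * Bᵀ).trace := by
    rw [hBB, cyc]; exact le_trans s1 s2
  calc cQ * cR * ‖μ‖ ^ (2 * m)
      = cQ * (cR * ‖μ‖ ^ (2 * m)) := by ring
    _ ≤ cQ * (B * Bᵀ).trace := mul_le_mul_of_nonneg_left s4 hcQ.le
    _ ≤ (Q * (B * Bᵀ)).trace := s3
    _ = (Q * (A ^ m * R * (Aᵀ) ^ m)).trace := by rw [hBB]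
end
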